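/- arXiv:1711.02979 — 6 statements merged into one kernel-verified Lean document; each statement's English description precedes it below -/
import Mathlib

section
/- Define sequences $(B^p_k)_{k \in \mathbb{Z}}$ for $p \ge 1$ by: $B^1_0 = 2/3$, $B^1_{\pm 1} = 1/6$, $B^1_k = 0$ for $|k| \ge 2$, and recursively $B^p_k = \frac{(p+k+1)^2 B^{p-1}_{k+1} - 2(k^2 - p - p^2) B^{p-1}_k + (p-k+1)^2 B^{p-1}_{k-1}}{2p(2p+1)}$. Then for every $p \ge 1$: $p + 1 = 12 \sum_{k=1}^{p} k^2 B^p_k$. -/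
open Finset

private lemma sum_shift (f : ℤ → ℝ) (a b c : ℤ) :
    ∑ k ∈ Icc a b, f (k + c) = ∑ j ∈ Icc (a + c) (b + c), f j := by
  apply Finset.sum_nbij' (i := fun k => k + c) (j := fun k => k - c) <;>
    simp (config := {contextual := true}) [Finset.mem_Icc] <;> omega

private lemma pad (f : ℤ → ℝ) (m a b : ℤ) (hm : 0 ≤ m) (ha : a ≤ -m) (hb : m ≤ b)
    (h0 : ∀ k : ℤ, m < |k| → f k = 0) :
    ∑ k ∈ Icc a b, f k = ∑ k ∈ Icc (-m) m, f k := by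
  symm
  apply Finset.sum_subset
  · intro k hk; simp only [mem_Icc] at *; omega
  · intro k _ hk; simp only [mem_Icc] at hk
    exact h0 k (by rcases abs_cases k with ⟨h1, h2⟩ | ⟨h1, h2⟩ <;> omega)

private lemma suppB (B : ℕ → ℤ → ℝ)
    (h1supp : ∀ k : ℤ, 2 ≤ |k| → B 1 k = 0)
    (hrec : ∀ p : ℕ, 2 ≤ p → ∀ k : ℤ,
      B p k = (((p : ℝ) + k + 1)^2 * B (p-1) (k+1)
               - 2 * ((k : ℝ)^2 - p - (p : ℝ)^2) * B (p-1) k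
               + ((p : ℝ) - k + 1)^2 * B (p-1) (k-1)) / (2 * p * (2 * p + 1))) :
    ∀ p : ℕ, 1 ≤ p → ∀ k : ℤ, (p : ℤ) < |k| → B p k = 0 := by
  intro p hp
  induction p, hp using Nat.le_induction with
  | base => intro k hk; exact h1supp k (by omega)
  | succ p hp ih =>
    intro k hk
    push_cast at hk
    rw [hrec (p+1) (by omega), Nat.add_sub_cancel,
        ih (k+1) (by rcases abs_cases k with ⟨h1,h2⟩|⟨h1,h2⟩ <;>
          rcases abs_cases (k+1) with ⟨h3,h4⟩|⟨h3,h4⟩ <;> omega),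
        ih k (by rcases abs_cases k with ⟨h1,h2⟩|⟨h1,h2⟩ <;> omega),
        ih (k-1) (by rcases abs_cases k with ⟨h1,h2⟩|⟨h1,h2⟩ <;>
          rcases abs_cases (k-1) with ⟨h3,h4⟩|⟨h3,h4⟩ <;> omega)]
    ring

private lemma symmB (B : ℕ → ℤ → ℝ)
    (h11 : B 1 1 = 1/6) (h1m1 : B 1 (-1) = 1/6)
    (h1supp : ∀ k : ℤ, 2 ≤ |k| → B 1 k = 0)
    (hrec : ∀ p : ℕ, 2 ≤ p → ∀ k : ℤ,
      B p k = (((p : ℝ) + k + 1)^2 * B (p-1) (k+1)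
               - 2 * ((k : ℝ)^2 - p - (p : ℝ)^2) * B (p-1) k
               + ((p : ℝ) - k + 1)^2 * B (p-1) (k-1)) / (2 * p * (2 * p + 1))) :
    ∀ p : ℕ, 1 ≤ p → ∀ k : ℤ, B p (-k) = B p k := by
  intro p hp
  induction p, hp using Nat.le_induction with
  | base =>
    intro k
    by_cases h0 : k = 0
    · simp [h0]
    by_cases h1 : k = 1
    · rw [h1]; rw [h1m1, h11]
    by_cases h2 : k = -1
    · rw [h2]; simp only [neg_neg]; rw [h1m1, h11]
    · rw [h1supp k (by rcases abs_cases k with ⟨ha,hb⟩|⟨ha,hb⟩ <;> omega),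
          h1supp (-k) (by rw [abs_neg]; rcases abs_cases k with ⟨ha,hb⟩|⟨ha,hb⟩ <;> omega)]
  | succ p hp ih =>
    intro k
    rw [hrec (p+1) (by omega), hrec (p+1) (by omega), Nat.add_sub_cancel]
    have e1 : (-k + 1 : ℤ) = -(k - 1) := by ring
    have e2 : (-k - 1 : ℤ) = -(k + 1) := by ring
    rw [e1, e2, ih (k-1), ih (k+1), ih k]
    push_cast
    ring

private lemma masterB (B : ℕ → ℤ → ℝ)
    (hrec : ∀ p : ℕ, 2 ≤ p → ∀ k : ℤ,
      B p k = (((p : ℝ) + k + 1)^2 * B (p-1) (k+1)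
               - 2 * ((k : ℝ)^2 - p - (p : ℝ)^2) * B (p-1) k
               + ((p : ℝ) - k + 1)^2 * B (p-1) (k-1)) / (2 * p * (2 * p + 1)))
    (p : ℕ) (hp : 1 ≤ p)
    (hsupp : ∀ k : ℤ, (p : ℤ) < |k| → B p k = 0) (C : ℤ → ℝ) :
    (2*((p:ℝ)+1)*(2*((p:ℝ)+1)+1)) * ∑ k ∈ Icc (-((p:ℤ)+1)) ((p:ℤ)+1), C k * B (p+1) k
    = ∑ j ∈ Icc (-(p:ℤ)) (p:ℤ),
        (C (j-1) * (((p:ℝ)+1) + (j:ℝ))^2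
         + 2 * C j * (((p:ℝ)+1) + ((p:ℝ)+1)^2 - (j:ℝ)^2)
         + C (j+1) * (((p:ℝ)+1) - (j:ℝ))^2) * B p j := by
  set f1 : ℤ → ℝ := fun j => C (j-1) * (((p:ℝ)+1) + (j:ℝ))^2 * B p j with hf1
  set f2 : ℤ → ℝ := fun j => 2 * C j * (((p:ℝ)+1) + ((p:ℝ)+1)^2 - (j:ℝ)^2) * B p j with hf2
  set f3 : ℤ → ℝ := fun j => C (j+1) * (((p:ℝ)+1) - (j:ℝ))^2 * B p j with hf3
  have step1 : (2*((p:ℝ)+1)*(2*((p:ℝ)+1)+1)) * ∑ k ∈ Icc (-((p:ℤ)+1)) ((p:ℤ)+1), C k * B (p+1) k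
      = ∑ k ∈ Icc (-((p:ℤ)+1)) ((p:ℤ)+1), (f1 (k+1) + f2 k + f3 (k + (-1))) := by
    rw [Finset.mul_sum]
    apply Finset.sum_congr rfl
    intro k _
    rw [hrec (p+1) (by omega), Nat.add_sub_cancel]
    simp only [hf1, hf2, hf3]
    have e3 : (k + (-1) : ℤ) = k - 1 := by ring
    rw [e3]
    push_cast
    have hD : (2*((p:ℝ)+1)*(2*((p:ℝ)+1)+1)) ≠ 0 := by positivity
    field_simp
    ring
  rw [step1, Finset.sum_add_distrib, Finset.sum_add_distrib]
  have hs1 : ∑ k ∈ Icc (-((p:ℤ)+1)) ((p:ℤ)+1), f1 (k+1) = ∑ j ∈ Icc (-(p:ℤ)) (p:ℤ), f1 j := by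
    rw [sum_shift]
    apply pad _ (p:ℤ) _ _ (by positivity) (by omega) (by omega)
    intro k hk; simp only [hf1, hsupp k hk, mul_zero]
  have hs3 : ∑ k ∈ Icc (-((p:ℤ)+1)) ((p:ℤ)+1), f3 (k + (-1)) = ∑ j ∈ Icc (-(p:ℤ)) (p:ℤ), f3 j := by
    rw [sum_shift]
    apply pad _ (p:ℤ) _ _ (by positivity) (by omega) (by omega)
    intro k hk; simp only [hf3, hsupp k hk, mul_zero]
  have hs2 : ∑ k ∈ Icc (-((p:ℤ)+1)) ((p:ℤ)+1), f2 k = ∑ j ∈ Icc (-(p:ℤ)) (p:ℤ), f2 j := by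
    apply pad _ (p:ℤ) _ _ (by positivity) (by omega) (by omega)
    intro k hk; simp only [hf2, hsupp k hk, mul_zero]
  rw [hs1, hs2, hs3, ← Finset.sum_add_distrib, ← Finset.sum_add_distrib]
  apply Finset.sum_congr rfl
  intro j _
  simp only [hf1, hf2, hf3]
  ring

private lemma M0B (B : ℕ → ℤ → ℝ)
    (h10 : B 1 0 = 2/3) (h11 : B 1 1 = 1/6) (h1m1 : B 1 (-1) = 1/6)
    (h1supp : ∀ k : ℤ, 2 ≤ |k| → B 1 k = 0)
    (hrec : ∀ p : ℕ, 2 ≤ p → ∀ k : ℤ,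
      B p k = (((p : ℝ) + k + 1)^2 * B (p-1) (k+1)
               - 2 * ((k : ℝ)^2 - p - (p : ℝ)^2) * B (p-1) k
               + ((p : ℝ) - k + 1)^2 * B (p-1) (k-1)) / (2 * p * (2 * p + 1))) :
    ∀ p : ℕ, 1 ≤ p → ∑ k ∈ Icc (-(p:ℤ)) (p:ℤ), B p k = 1 := by
  intro p hp
  induction p, hp using Nat.le_induction with
  | base =>
    have h : Finset.Icc (-(1:ℤ)) (1:ℤ) = {-1, 0, 1} := by decide
    rw [show ((1:ℕ):ℤ) = 1 from rfl, h,
        Finset.sum_insert (by decide), Finset.sum_insert (by decide), Finset.sum_singleton,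
        h10, h11, h1m1]
    norm_num
  | succ p hp ih =>
    have hD : (2*((p:ℝ)+1)*(2*((p:ℝ)+1)+1)) ≠ 0 := by positivity
    have hm := masterB B hrec p hp (suppB B h1supp hrec p hp) (fun _ => 1)
    simp only [one_mul] at hm
    have hc : ∑ j ∈ Icc (-(p:ℤ)) (p:ℤ),
        ((((p:ℝ)+1) + (j:ℝ))^2 + 2 * 1 * (((p:ℝ)+1) + ((p:ℝ)+1)^2 - (j:ℝ)^2)
          + (((p:ℝ)+1) - (j:ℝ))^2) * B p j
        = (2*((p:ℝ)+1)*(2*((p:ℝ)+1)+1)) * ∑ j ∈ Icc (-(p:ℤ)) (p:ℤ), B p j := by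
      rw [Finset.mul_sum]
      exact Finset.sum_congr rfl fun j _ => by ring
    rw [hc, ih] at hm
    have := mul_left_cancel₀ hD hm
    push_cast
    convert this using 2 <;> push_cast <;> ring

private lemma M2B (B : ℕ → ℤ → ℝ)
    (h10 : B 1 0 = 2/3) (h11 : B 1 1 = 1/6) (h1m1 : B 1 (-1) = 1/6)
    (h1supp : ∀ k : ℤ, 2 ≤ |k| → B 1 k = 0)
    (hrec : ∀ p : ℕ, 2 ≤ p → ∀ k : ℤ,
      B p k = (((p : ℝ) + k + 1)^2 * B (p-1) (k+1)
               - 2 * ((k : ℝ)^2 - p - (p : ℝ)^2) * B (p-1) k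
               + ((p : ℝ) - k + 1)^2 * B (p-1) (k-1)) / (2 * p * (2 * p + 1))) :
    ∀ p : ℕ, 1 ≤ p → ∑ k ∈ Icc (-(p:ℤ)) (p:ℤ), (k:ℝ)^2 * B p k = ((p:ℝ)+1)/6 := by
  intro p hp
  induction p, hp using Nat.le_induction with
  | base =>
    have h : Finset.Icc (-(1:ℤ)) (1:ℤ) = {-1, 0, 1} := by decide
    rw [show ((1:ℕ):ℤ) = 1 from rfl, h,
        Finset.sum_insert (by decide), Finset.sum_insert (by decide), Finset.sum_singleton,
        h10, h11, h1m1]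
    norm_num
  | succ p hp ih =>
    have hD : (2*((p:ℝ)+1)*(2*((p:ℝ)+1)+1)) ≠ 0 := by positivity
    have hm := masterB B hrec p hp (suppB B h1supp hrec p hp) (fun j => (j:ℝ)^2)
    have hc : ∑ j ∈ Icc (-(p:ℤ)) (p:ℤ),
        ((((j-1:ℤ)):ℝ)^2 * (((p:ℝ)+1) + (j:ℝ))^2
          + 2 * (j:ℝ)^2 * (((p:ℝ)+1) + ((p:ℝ)+1)^2 - (j:ℝ)^2)
          + (((j+1:ℤ)):ℝ)^2 * (((p:ℝ)+1) - (j:ℝ))^2) * B p j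
        = (2*(2*(p:ℝ)+1)*(p:ℝ)) * (∑ j ∈ Icc (-(p:ℤ)) (p:ℤ), (j:ℝ)^2 * B p j)
          + (2*((p:ℝ)+1)^2) * ∑ j ∈ Icc (-(p:ℤ)) (p:ℤ), B p j := by
      rw [Finset.mul_sum, Finset.mul_sum, ← Finset.sum_add_distrib]
      refine Finset.sum_congr rfl fun j _ => ?_
      push_cast
      ring
    rw [hc, ih, M0B B h10 h11 h1m1 h1supp hrec p hp, mul_one] at hm
    have key : (2*((p:ℝ)+1)*(2*((p:ℝ)+1)+1)) * ∑ k ∈ Icc (-((p:ℤ)+1)) ((p:ℤ)+1), (k:ℝ)^2 * B (p+1) k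
        = (2*((p:ℝ)+1)*(2*((p:ℝ)+1)+1)) * (((p:ℝ)+1+1)/6) := by
      rw [hm]; field_simp; ring
    have := mul_left_cancel₀ hD key
    push_cast
    convert this using 2 <;> push_cast <;> ring

theorem stmt_2 (B : ℕ → ℤ → ℝ)
    (h10 : B 1 0 = 2/3) (h11 : B 1 1 = 1/6) (h1m1 : B 1 (-1) = 1/6)
    (h1supp : ∀ k : ℤ, 2 ≤ |k| → B 1 k = 0)
    (hrec : ∀ p : ℕ, 2 ≤ p → ∀ k : ℤ,
      B p k = (((p : ℝ) + k + 1)^2 * B (p-1) (k+1)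
               - 2 * ((k : ℝ)^2 - p - (p : ℝ)^2) * B (p-1) k
               + ((p : ℝ) - k + 1)^2 * B (p-1) (k-1)) / (2 * p * (2 * p + 1))) :
    ∀ p : ℕ, 1 ≤ p →
      (p : ℝ) + 1 = 12 * ∑ k ∈ Finset.Icc (1 : ℤ) (p : ℤ), (k : ℝ)^2 * B p k := by
  intro p hp
  have hM2 := M2B B h10 h11 h1m1 h1supp hrec p hp
  have hsym := symmB B h11 h1m1 h1supp hrec p hp
  have hsplit : ∑ k ∈ Icc (-(p:ℤ)) (p:ℤ), (k:ℝ)^2 * B p k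
      = (∑ k ∈ Icc (-(p:ℤ)) (-1 : ℤ), (k:ℝ)^2 * B p k)
        + ∑ k ∈ Icc (0:ℤ) (p:ℤ), (k:ℝ)^2 * B p k := by
    rw [← Finset.sum_union (by
      simp only [Finset.disjoint_left, mem_Icc]
      intro a ha hb; omega)]
    apply Finset.sum_congr _ (fun _ _ => rfl)
    ext k; simp only [mem_union, mem_Icc]; omega
  have hzero : ∑ k ∈ Icc (0:ℤ) (p:ℤ), (k:ℝ)^2 * B p k
      = ∑ k ∈ Icc (1:ℤ) (p:ℤ), (k:ℝ)^2 * B p k := by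
    rw [show Icc (0:ℤ) (p:ℤ) = insert 0 (Icc (1:ℤ) (p:ℤ)) by ext k; simp [mem_Icc]; omega,
        Finset.sum_insert (by simp)]
    norm_num
  have hneg : ∑ k ∈ Icc (-(p:ℤ)) (-1 : ℤ), (k:ℝ)^2 * B p k
      = ∑ k ∈ Icc (1:ℤ) (p:ℤ), (k:ℝ)^2 * B p k := by
    apply Finset.sum_nbij' (i := fun k => -k) (j := fun k => -k)
    · intro a ha; simp only [mem_Icc] at *; omega
    · intro a ha; simp only [mem_Icc] at *; omega
    · intro a _; ring
    · intro a _; ring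
    · intro a _
      rw [show ((-a : ℤ) : ℝ) = -(a:ℝ) by push_cast; ring, hsym a]
      ring
  rw [hsplit, hzero, hneg] at hM2
  rw [show (12:ℝ) * ∑ k ∈ Finset.Icc (1 : ℤ) (p : ℤ), (k:ℝ)^2 * B p k
      = 6 * ((∑ k ∈ Finset.Icc (1:ℤ) (p:ℤ), (k:ℝ)^2 * B p k)
             + ∑ k ∈ Finset.Icc (1:ℤ) (p:ℤ), (k:ℝ)^2 * B p k) by ring, hM2]
  ring
end

section
/- For every positive integer $n$, the $n \times n$ matrix $\tilde\aleph$ with entries $\tilde\aleph_{m,k} = \frac{k^{2m+2}}{(2m+2)!}$ for $m, k = 1, \dots, n$ is invertible. Consequently, for any vector $\hat A \in \mathbb{R}^n$, the linear system $\aleph \hat B = -\tilde\aleph \hat A$ (with $\aleph_{m,k} = k^{2m}/(2m)!$) has a unique solution $\hat B \in \mathbb{R}^n$. -/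
theorem aux_unit (n : ℕ) (c d v : Fin n → ℝ) (hc : ∀ m, c m ≠ 0) (hd : ∀ k, d k ≠ 0)
    (hv : Function.Injective v) :
    IsUnit (Matrix.of fun m k : Fin n => c m * (d k * v k ^ (m : ℕ))) := by
  rw [Matrix.isUnit_iff_isUnit_det, isUnit_iff_ne_zero]
  have h1 : (Matrix.of fun m k : Fin n => c m * (d k * v k ^ (m : ℕ))).det
      = (∏ m, c m) * ((∏ k, d k) * (Matrix.vandermonde v).transpose.det) := by
    rw [show (Matrix.of fun m k : Fin n => c m * (d k * v k ^ (m : ℕ)))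
        = Matrix.of (fun m k => c m * (Matrix.of fun i j : Fin n =>
            d j * (Matrix.vandermonde v).transpose i j) m k) from rfl]
    rw [Matrix.det_mul_column, Matrix.det_mul_row]
  rw [h1, Matrix.det_transpose, Matrix.det_vandermonde]
  refine mul_ne_zero (Finset.prod_ne_zero_iff.2 fun m _ => hc m)
    (mul_ne_zero (Finset.prod_ne_zero_iff.2 fun k _ => hd k) ?_)
  refine Finset.prod_ne_zero_iff.2 fun i _ => Finset.prod_ne_zero_iff.2
    fun j hj => sub_ne_zero.2 ?_
  intro h
  exact absurd (hv h) (Finset.mem_Ioi.1 hj).ne'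

theorem stmt_5 (n : ℕ) (hn : 0 < n) :
    IsUnit (Matrix.of (fun m k : Fin n =>
      ((k : ℝ) + 1)^(2 * ((m : ℕ) + 1) + 2) / (Nat.factorial (2 * ((m : ℕ) + 1) + 2)))) ∧
    ∀ A : Fin n → ℝ, ∃! B : Fin n → ℝ,
      (Matrix.of (fun m k : Fin n =>
        ((k : ℝ) + 1)^(2 * ((m : ℕ) + 1)) / (Nat.factorial (2 * ((m : ℕ) + 1))))).mulVec B
      = - (Matrix.of (fun m k : Fin n =>
        ((k : ℝ) + 1)^(2 * ((m : ℕ) + 1) + 2) / (Nat.factorial (2 * ((m : ℕ) + 1) + 2)))).mulVec A := by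
  have hv : Function.Injective (fun k : Fin n => ((k : ℝ) + 1) ^ 2) := by
    intro a b h
    simp only at h
    have h2 : ((a : ℕ) : ℝ) = ((b : ℕ) : ℝ) := by nlinarith [sq_nonneg ((a : ℝ) + (b : ℝ) + 2)]
    exact Fin.ext (by exact_mod_cast h2)
  have hfac : ∀ j : ℕ, ((Nat.factorial j : ℝ)) ≠ 0 := fun j =>
    Nat.cast_ne_zero.2 (Nat.factorial_ne_zero j)
  have hvne : ∀ k : Fin n, ((k : ℝ) + 1) ^ 2 ≠ 0 := fun k => by positivity
  have hU2 : IsUnit (Matrix.of (fun m k : Fin n =>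
      ((k : ℝ) + 1)^(2 * ((m : ℕ) + 1) + 2) / (Nat.factorial (2 * ((m : ℕ) + 1) + 2)))) := by
    have heq : (Matrix.of (fun m k : Fin n =>
        ((k : ℝ) + 1)^(2 * ((m : ℕ) + 1) + 2) / (Nat.factorial (2 * ((m : ℕ) + 1) + 2))))
        = Matrix.of (fun m k : Fin n =>
          ((Nat.factorial (2 * ((m : ℕ) + 1) + 2) : ℝ))⁻¹ *
            (((((k : ℝ) + 1) ^ 2) ^ 2) * (((k : ℝ) + 1) ^ 2) ^ (m : ℕ))) := by
      funext m k
      simp only [Matrix.of_apply]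
      rw [div_eq_inv_mul]
      simp only [← pow_mul]
      ring
    rw [heq]
    exact aux_unit n _ _ _ (fun m => inv_ne_zero (hfac _)) (fun k => pow_ne_zero 2 (hvne k)) hv
  have hU1 : IsUnit (Matrix.of (fun m k : Fin n =>
      ((k : ℝ) + 1)^(2 * ((m : ℕ) + 1)) / (Nat.factorial (2 * ((m : ℕ) + 1))))) := by
    have heq : (Matrix.of (fun m k : Fin n =>
        ((k : ℝ) + 1)^(2 * ((m : ℕ) + 1)) / (Nat.factorial (2 * ((m : ℕ) + 1)))))
        = Matrix.of (fun m k : Fin n =>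
          ((Nat.factorial (2 * ((m : ℕ) + 1)) : ℝ))⁻¹ *
            ((((k : ℝ) + 1) ^ 2) * (((k : ℝ) + 1) ^ 2) ^ (m : ℕ))) := by
      funext m k
      simp only [Matrix.of_apply]
      rw [div_eq_inv_mul]
      simp only [← pow_mul]
      ring
    rw [heq]
    exact aux_unit n _ _ _ (fun m => inv_ne_zero (hfac _)) hvne hv
  refine ⟨hU2, fun A => ?_⟩
  set M : Matrix (Fin n) (Fin n) ℝ := Matrix.of (fun m k : Fin n =>
    ((k : ℝ) + 1)^(2 * ((m : ℕ) + 1)) / (Nat.factorial (2 * ((m : ℕ) + 1)))) with hMdef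
  set y : Fin n → ℝ := - (Matrix.of (fun m k : Fin n =>
    ((k : ℝ) + 1)^(2 * ((m : ℕ) + 1) + 2) / (Nat.factorial (2 * ((m : ℕ) + 1) + 2)))).mulVec A
  have hdet : IsUnit M.det := (Matrix.isUnit_iff_isUnit_det M).1 hU1
  refine ⟨M⁻¹.mulVec y, ?_, fun B hB => ?_⟩
  · show M.mulVec (M⁻¹.mulVec y) = y
    rw [Matrix.mulVec_mulVec, Matrix.mul_nonsing_inv _ hdet, Matrix.one_mulVec]
  · have h := congrArg (M⁻¹.mulVec) hB
    rwa [Matrix.mulVec_mulVec, Matrix.nonsing_inv_mul _ hdet, Matrix.one_mulVec] at h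
end

section
/- Let $p \ge 2$ and let $(a_k)_{k=1}^p, (b_k)_{k=1}^p$ be real numbers satisfying $\sum_{k=1}^p \left( \frac{k^{2m}}{(2m)!} a_k + \frac{k^{2m-2}}{(2m-2)!} b_k \right) = 0$ for all $m = 2, 3, \dots, p$. Define $C_2 = 1$ and recursively, for $m \ge 2$, $C_{2m} = \sum_{k=1}^p \frac{(-1)^m k^{2m}}{(2m)!} a_k - \sum_{q=1}^{m-1} \sum_{k=1}^p C_{2m-2q} \frac{(-1)^q k^{2q}}{(2q)!} b_k$. Then $C_{2m} = 0$ for all $m = 2, 3, \dots, p$. -/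
theorem stmt_6 (p : ℕ) (hp : 2 ≤ p) (a b : ℕ → ℝ)
    (hab : ∀ m : ℕ, 2 ≤ m → m ≤ p →
      ∑ k ∈ Finset.Icc 1 p, ((k : ℝ)^(2*m) / Nat.factorial (2*m) * a k
        + (k : ℝ)^(2*m-2) / Nat.factorial (2*m-2) * b k) = 0)
    (C : ℕ → ℝ) (hC1 : C 1 = 1)
    (hCrec : ∀ m : ℕ, 2 ≤ m →
      C m = ∑ k ∈ Finset.Icc 1 p, (-1 : ℝ)^m * (k : ℝ)^(2*m) / Nat.factorial (2*m) * a k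
        - ∑ q ∈ Finset.Icc 1 (m-1), ∑ k ∈ Finset.Icc 1 p,
            C (m - q) * ((-1 : ℝ)^q * (k : ℝ)^(2*q) / Nat.factorial (2*q)) * b k) :
    ∀ m : ℕ, 2 ≤ m → m ≤ p → C m = 0 := by
  intro m
  induction m using Nat.strong_induction_on with
  | _ m ih =>
    intro hm2 hmp
    have hcol : ∀ q ∈ Finset.Icc 1 (m-1), q ≠ m-1 →
        (∑ k ∈ Finset.Icc 1 p,
          C (m - q) * ((-1:ℝ)^q * (k:ℝ)^(2*q) / Nat.factorial (2*q)) * b k) = 0 := by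
      intro q hq hqne
      simp only [Finset.mem_Icc] at hq
      have hz : C (m - q) = 0 := ih (m - q) (by omega) (by omega) (by omega)
      simp [hz]
    have hmem : m - 1 ∈ Finset.Icc 1 (m-1) := by
      simp only [Finset.mem_Icc]; omega
    rw [hCrec m hm2, Finset.sum_eq_single_of_mem (m-1) hmem hcol]
    have h1 : m - (m-1) = 1 := by omega
    have h2 : 2*(m-1) = 2*m - 2 := by omega
    have hneg : ((-1:ℝ))^(m-1) = -(-1:ℝ)^m := by
      conv_rhs => rw [show m = m-1+1 by omega]
      rw [pow_succ]; ring
    rw [h1, hC1, h2, hneg]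
    have key := hab m hm2 hmp
    have hcomb : (∑ k ∈ Finset.Icc 1 p, (-1 : ℝ)^m * (k : ℝ)^(2*m) / Nat.factorial (2*m) * a k)
        - ∑ k ∈ Finset.Icc 1 p, 1 * (-(-1:ℝ)^m * (k:ℝ)^(2*m-2) / Nat.factorial (2*m-2)) * b k
        = (-1:ℝ)^m * ∑ k ∈ Finset.Icc 1 p, ((k : ℝ)^(2*m) / Nat.factorial (2*m) * a k
          + (k : ℝ)^(2*m-2) / Nat.factorial (2*m-2) * b k) := by
      rw [Finset.mul_sum, ← Finset.sum_sub_distrib]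
      apply Finset.sum_congr rfl
      intro k _
      ring
    rw [hcomb, key, mul_zero]
end

section
/- Let $p \ge 1$ and let $(a_k), (b_k), (\tilde b_k)$ be real sequences for $k = 1, \dots, p$ such that $\sum_{k=1}^p \left( \frac{k^{2m}}{(2m)!} a_k + \frac{k^{2m-2}}{(2m-2)!} b_k \right) = 0$ and $\sum_{k=1}^p \left( \frac{k^{2m}}{(2m)!} a_k + \frac{k^{2m-2}}{(2m-2)!} \tilde b_k \right) = 0$ for all $m = 2, \dots, p$, and such that $\sum_{k=1}^p \frac{k^{2p}}{(2p)!} (\tilde b_k - b_k) \ne 0$. Define $\tau = \dfrac{\sum_{k=1}^p \frac{k^{2p+2}}{(2p+2)!} a_k + \frac{k^{2p}}{(2p)!} \tilde b_k}{\sum_{k=1}^p \frac{k^{2p}}{(2p)!} (\tilde b_k - b_k)}$ and $b^\tau_k = \tau b_k + (1-\tau) \tilde b_k$. Then $\sum_{k=1}^p \left( \frac{k^{2m}}{(2m)!} a_k + \frac{k^{2m-2}}{(2m-2)!} b^\tau_k \right) = 0$ for all $m = 2, 3, \dots, p+1$. -/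
theorem stmt_8 (p : ℕ) (hp : 1 ≤ p) (a b btil : ℕ → ℝ)
    (hb : ∀ m : ℕ, 2 ≤ m → m ≤ p →
      ∑ k ∈ Finset.Icc 1 p, ((k : ℝ)^(2*m) / Nat.factorial (2*m) * a k
        + (k : ℝ)^(2*m-2) / Nat.factorial (2*m-2) * b k) = 0)
    (hbtil : ∀ m : ℕ, 2 ≤ m → m ≤ p →
      ∑ k ∈ Finset.Icc 1 p, ((k : ℝ)^(2*m) / Nat.factorial (2*m) * a k
        + (k : ℝ)^(2*m-2) / Nat.factorial (2*m-2) * btil k) = 0)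
    (hne : ∑ k ∈ Finset.Icc 1 p, (k : ℝ)^(2*p) / Nat.factorial (2*p) * (btil k - b k) ≠ 0)
    (τ : ℝ)
    (hτ : τ = (∑ k ∈ Finset.Icc 1 p, ((k : ℝ)^(2*p+2) / Nat.factorial (2*p+2) * a k
        + (k : ℝ)^(2*p) / Nat.factorial (2*p) * btil k))
      / ∑ k ∈ Finset.Icc 1 p, (k : ℝ)^(2*p) / Nat.factorial (2*p) * (btil k - b k))
    (bτ : ℕ → ℝ) (hbτ : ∀ k, bτ k = τ * b k + (1 - τ) * btil k) :
    ∀ m : ℕ, 2 ≤ m → m ≤ p + 1 →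
      ∑ k ∈ Finset.Icc 1 p, ((k : ℝ)^(2*m) / Nat.factorial (2*m) * a k
        + (k : ℝ)^(2*m-2) / Nat.factorial (2*m-2) * bτ k) = 0 := by
  intro m hm2 hmp
  have hsplit : ∑ k ∈ Finset.Icc 1 p, ((k : ℝ)^(2*m) / Nat.factorial (2*m) * a k
        + (k : ℝ)^(2*m-2) / Nat.factorial (2*m-2) * bτ k)
      = τ * (∑ k ∈ Finset.Icc 1 p, ((k : ℝ)^(2*m) / Nat.factorial (2*m) * a k
        + (k : ℝ)^(2*m-2) / Nat.factorial (2*m-2) * b k))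
      + (1 - τ) * (∑ k ∈ Finset.Icc 1 p, ((k : ℝ)^(2*m) / Nat.factorial (2*m) * a k
        + (k : ℝ)^(2*m-2) / Nat.factorial (2*m-2) * btil k)) := by
    rw [Finset.mul_sum, Finset.mul_sum, ← Finset.sum_add_distrib]
    apply Finset.sum_congr rfl
    intro k _
    rw [hbτ]; ring
  rcases Nat.lt_or_ge m (p + 1) with h | h
  · rw [hsplit, hb m hm2 (Nat.lt_succ_iff.mp h), hbtil m hm2 (Nat.lt_succ_iff.mp h)]
    ring
  · have hm : m = p + 1 := le_antisymm hmp h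
    subst hm
    have h1 : 2 * (p + 1) = 2 * p + 2 := by ring
    have h2 : 2 * (p + 1) - 2 = 2 * p := by omega
    rw [hsplit]
    have h3 : 2 * p + 2 - 2 = 2 * p := by omega
    simp only [h1, h2, h3]
    have hdiff : (∑ k ∈ Finset.Icc 1 p, ((k : ℝ)^(2*p+2) / Nat.factorial (2*p+2) * a k
          + (k : ℝ)^(2*p) / Nat.factorial (2*p) * btil k))
        - (∑ k ∈ Finset.Icc 1 p, ((k : ℝ)^(2*p+2) / Nat.factorial (2*p+2) * a k
          + (k : ℝ)^(2*p) / Nat.factorial (2*p) * b k))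
        = ∑ k ∈ Finset.Icc 1 p, (k : ℝ)^(2*p) / Nat.factorial (2*p) * (btil k - b k) := by
      rw [← Finset.sum_sub_distrib]
      apply Finset.sum_congr rfl
      intro k _; ring
    set N := ∑ k ∈ Finset.Icc 1 p, ((k : ℝ)^(2*p+2) / Nat.factorial (2*p+2) * a k
          + (k : ℝ)^(2*p) / Nat.factorial (2*p) * btil k)
    set Sb := ∑ k ∈ Finset.Icc 1 p, ((k : ℝ)^(2*p+2) / Nat.factorial (2*p+2) * a k
          + (k : ℝ)^(2*p) / Nat.factorial (2*p) * b k)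
    set D := ∑ k ∈ Finset.Icc 1 p, (k : ℝ)^(2*p) / Nat.factorial (2*p) * (btil k - b k)
    rw [hτ]
    have : N / D * Sb + (1 - N / D) * N = N - N / D * (N - Sb) := by ring
    rw [this, hdiff, div_mul_cancel₀ _ hne, sub_self]
end

section
/- Let $p \ge 1$, let $(a_k)_{k=1}^p, (b_k)_{k=1}^p$ be real numbers, and suppose the dispersion identities $\sum_{k=1}^p \left( \frac{k^{2m}}{(2m)!} a_k + \frac{k^{2m-2}}{(2m-2)!} b_k \right) = 0$ hold for $m = 2, \dots, p+1$, together with $\sum_{k=1}^p k^2 a_k = -1$ and $b_0 + 2\sum_{k=1}^p b_k = 1$ where $b_0$ is defined by the latter. Define $f(\Lambda) = \dfrac{a_0 + 2 \sum_{k=1}^p a_k \cos(k\Lambda)}{b_0 + 2 \sum_{k=1}^p b_k \cos(k\Lambda)}$ with $a_0 = -2\sum_{k=1}^p a_k$. Then $f(\Lambda) - \Lambda^2 = O(\Lambda^{2p+4})$ as $\Lambda \to 0$. -/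
open Asymptotics Filter

lemma cos_taylor_tail (M : ℕ) :
    (fun x : ℝ => Real.cos x - ∑ n ∈ Finset.range M, (-1 : ℝ)^n * x^(2*n) / (Nat.factorial (2*n)))
      =O[nhds 0] fun x => x^(2*M) := by
  rw [Asymptotics.isBigO_iff]
  refine ⟨∑' n : ℕ, (1:ℝ) / Nat.factorial n, ?_⟩
  have hsummable : Summable (fun n : ℕ => (1:ℝ) / Nat.factorial n) := by
    simpa using Real.summable_pow_div_factorial 1
  filter_upwards [Metric.ball_mem_nhds (0:ℝ) one_pos] with x hx
  have hx1 : |x| ≤ 1 := by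
    simpa [Real.dist_eq] using le_of_lt (Metric.mem_ball.mp hx)
  set f : ℕ → ℝ := fun n => (-1 : ℝ)^n * x^(2*n) / Nat.factorial (2*n) with hf
  have htail : HasSum (fun n => f (n + M)) (Real.cos x - ∑ n ∈ Finset.range M, f n) := by
    rw [hasSum_nat_add_iff M]
    simpa using Real.hasSum_cos x
  have hb : ∀ n : ℕ, |f (n + M)| ≤ |x|^(2*M) * ((1:ℝ) / Nat.factorial n) := by
    intro n
    have h1 : |f (n + M)| = |x|^(2*(n+M)) / Nat.factorial (2*(n+M)) := by
      rw [hf]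
      rw [abs_div, abs_mul, abs_pow, abs_pow, abs_neg, abs_one, one_pow, one_mul,
        Nat.abs_cast]
    rw [h1]
    have h2 : |x|^(2*(n+M)) ≤ |x|^(2*M) := by
      calc |x|^(2*(n+M)) = |x|^(2*M) * |x|^(2*n) := by ring
      _ ≤ |x|^(2*M) * 1 := by
          exact mul_le_mul_of_nonneg_left (pow_le_one₀ (abs_nonneg x) hx1) (by positivity)
      _ = |x|^(2*M) := mul_one _
    have h3 : (Nat.factorial n : ℝ) ≤ Nat.factorial (2*(n+M)) := by
      exact_mod_cast Nat.factorial_le (by omega)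
    calc |x|^(2*(n+M)) / Nat.factorial (2*(n+M)) ≤ |x|^(2*M) / Nat.factorial n := by
          apply div_le_div₀ (by positivity) h2 (by positivity) h3
    _ = |x|^(2*M) * (1 / Nat.factorial n) := by ring
  have habs : ‖Real.cos x - ∑ n ∈ Finset.range M, f n‖ ≤ ∑' n : ℕ, |x|^(2*M) * ((1:ℝ)/Nat.factorial n) :=
    htail.norm_le_of_bounded (hsummable.mul_left _).hasSum (fun n => by simpa using hb n)
  have htsum : ∑' n : ℕ, |x|^(2*M) * ((1:ℝ)/Nat.factorial n)
      = (∑' n : ℕ, (1:ℝ)/Nat.factorial n) * |x|^(2*M) := by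
    rw [tsum_mul_left]; ring
  calc ‖Real.cos x - ∑ n ∈ Finset.range M, f n‖
      ≤ (∑' n : ℕ, (1:ℝ)/Nat.factorial n) * |x|^(2*M) := by rw [← htsum]; exact habs
    _ = (∑' n : ℕ, (1:ℝ)/Nat.factorial n) * ‖x^(2*M)‖ := by
        rw [Real.norm_eq_abs, abs_pow]

lemma cos_taylor_tail_mul (M : ℕ) (c : ℝ) :
    (fun x : ℝ => Real.cos (c*x) - ∑ n ∈ Finset.range M, (-1:ℝ)^n * (c*x)^(2*n) / Nat.factorial (2*n))
      =O[nhds 0] fun x => x^(2*M) := by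
  have ht : Filter.Tendsto (fun x : ℝ => c*x) (nhds 0) (nhds 0) := by
    have : Continuous (fun x : ℝ => c * x) := continuous_const.mul continuous_id
    simpa using this.tendsto 0
  have h := (cos_taylor_tail M).comp_tendsto ht
  have h2 : (fun x : ℝ => (c*x)^(2*M)) =O[nhds 0] fun x => x^(2*M) := by
    have he : (fun x : ℝ => (c*x)^(2*M)) = fun x => c^(2*M) * x^(2*M) := by
      funext x; rw [mul_pow]
    rw [he]
    exact (isBigO_refl (fun x : ℝ => x^(2*M)) _).const_mul_left _
  exact h.trans h2

theorem stmt_18 (p : ℕ) (hp : 1 ≤ p) (a b : ℕ → ℝ)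
    (hid : ∀ m : ℕ, 2 ≤ m → m ≤ p + 1 →
      ∑ k ∈ Finset.Icc 1 p, ((k : ℝ)^(2*m) / Nat.factorial (2*m) * a k
        + (k : ℝ)^(2*m-2) / Nat.factorial (2*m-2) * b k) = 0)
    (hcons : ∑ k ∈ Finset.Icc 1 p, (k : ℝ)^2 * a k = -1)
    (b₀ : ℝ) (hb₀ : b₀ = 1 - 2 * ∑ k ∈ Finset.Icc 1 p, b k)
    (a₀ : ℝ) (ha₀ : a₀ = -2 * ∑ k ∈ Finset.Icc 1 p, a k) :
    (fun Λ : ℝ =>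
        (a₀ + 2 * ∑ k ∈ Finset.Icc 1 p, a k * Real.cos (k * Λ))
          / (b₀ + 2 * ∑ k ∈ Finset.Icc 1 p, b k * Real.cos (k * Λ))
        - Λ^2)
      =O[nhds 0] (fun Λ : ℝ => Λ^(2*p+4)) := by
  -- the key polynomial identity
  have key : ∀ Λ : ℝ,
      a₀ + 2 * ∑ k ∈ Finset.Icc 1 p, a k *
          (∑ n ∈ Finset.range (p+2), (-1:ℝ)^n * ((k:ℝ)*Λ)^(2*n) / Nat.factorial (2*n))
      = Λ^2 * (b₀ + 2 * ∑ k ∈ Finset.Icc 1 p, b k *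
          (∑ n ∈ Finset.range (p+1), (-1:ℝ)^n * ((k:ℝ)*Λ)^(2*n) / Nat.factorial (2*n))) := by
    intro Λ
    have swap_a : ∑ k ∈ Finset.Icc 1 p, a k *
          (∑ n ∈ Finset.range (p+2), (-1:ℝ)^n * ((k:ℝ)*Λ)^(2*n) / Nat.factorial (2*n))
        = ∑ n ∈ Finset.range (p+2), ∑ k ∈ Finset.Icc 1 p,
            a k * ((-1:ℝ)^n * ((k:ℝ)*Λ)^(2*n) / Nat.factorial (2*n)) := by
      simp_rw [Finset.mul_sum]; exact Finset.sum_comm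
    have swap_b : ∑ k ∈ Finset.Icc 1 p, b k *
          (∑ n ∈ Finset.range (p+1), (-1:ℝ)^n * ((k:ℝ)*Λ)^(2*n) / Nat.factorial (2*n))
        = ∑ n ∈ Finset.range (p+1), ∑ k ∈ Finset.Icc 1 p,
            b k * ((-1:ℝ)^n * ((k:ℝ)*Λ)^(2*n) / Nat.factorial (2*n)) := by
      simp_rw [Finset.mul_sum]; exact Finset.sum_comm
    rw [swap_a, swap_b]
    rw [show p + 2 = (p+1)+1 from rfl]
    rw [Finset.sum_range_succ' _ (p+1), Finset.sum_range_succ' _ p,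
        Finset.sum_range_succ' _ p]
    -- the high-order terms cancel pairwise
    have hterm : ∀ n ∈ Finset.range p,
        ∑ k ∈ Finset.Icc 1 p, a k * ((-1:ℝ)^(n+1+1) * ((k:ℝ)*Λ)^(2*(n+1+1)) / Nat.factorial (2*(n+1+1)))
        = Λ^2 * ∑ k ∈ Finset.Icc 1 p, b k * ((-1:ℝ)^(n+1) * ((k:ℝ)*Λ)^(2*(n+1)) / Nat.factorial (2*(n+1))) := by
      intro n hn
      have hnp : n < p := Finset.mem_range.mp hn
      have hm := hid (n+2) (by omega) (by omega)
      rw [show 2*(n+2)-2 = 2*(n+1) from by omega] at hm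
      have hdiff : (∑ k ∈ Finset.Icc 1 p, a k * ((-1:ℝ)^(n+1+1) * ((k:ℝ)*Λ)^(2*(n+1+1)) / Nat.factorial (2*(n+1+1))))
          - Λ^2 * ∑ k ∈ Finset.Icc 1 p, b k * ((-1:ℝ)^(n+1) * ((k:ℝ)*Λ)^(2*(n+1)) / Nat.factorial (2*(n+1)))
          = ((-1:ℝ)^n * Λ^(2*(n+2))) *
            ∑ k ∈ Finset.Icc 1 p, ((k : ℝ)^(2*(n+2)) / Nat.factorial (2*(n+2)) * a k
              + (k : ℝ)^(2*(n+1)) / Nat.factorial (2*(n+1)) * b k) := by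
        rw [Finset.mul_sum, Finset.mul_sum, ← Finset.sum_sub_distrib]
        refine Finset.sum_congr rfl fun k _ => ?_
        rw [show n+1+1 = n+2 from rfl]
        ring
      have := hdiff
      rw [hm, mul_zero, sub_eq_zero] at this
      exact this
    rw [Finset.sum_congr rfl hterm, ← Finset.mul_sum]
    -- low-order terms
    have h1 : ∑ k ∈ Finset.Icc 1 p, a k * ((-1:ℝ)^(0+1) * ((k:ℝ)*Λ)^(2*(0+1)) / Nat.factorial (2*(0+1)))
        = -(Λ^2/2) * ∑ k ∈ Finset.Icc 1 p, (k:ℝ)^2 * a k := by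
      rw [Finset.mul_sum]
      refine Finset.sum_congr rfl fun k _ => ?_
      norm_num [Nat.factorial]
      ring
    have h0a : ∑ k ∈ Finset.Icc 1 p, a k * ((-1:ℝ)^(0:ℕ) * ((k:ℝ)*Λ)^(2*(0:ℕ)) / Nat.factorial (2*(0:ℕ)))
        = ∑ k ∈ Finset.Icc 1 p, a k := by
      refine Finset.sum_congr rfl fun k _ => ?_
      norm_num
    have h0b : ∑ k ∈ Finset.Icc 1 p, b k * ((-1:ℝ)^(0:ℕ) * ((k:ℝ)*Λ)^(2*(0:ℕ)) / Nat.factorial (2*(0:ℕ)))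
        = ∑ k ∈ Finset.Icc 1 p, b k := by
      refine Finset.sum_congr rfl fun k _ => ?_
      norm_num
    rw [h1, h0a, h0b, hcons, ha₀, hb₀]
    ring
  -- big-O of numerator minus Λ²·denominator
  have hA : (fun Λ : ℝ => ∑ k ∈ Finset.Icc 1 p, a k * (Real.cos ((k:ℝ)*Λ)
        - ∑ n ∈ Finset.range (p+2), (-1:ℝ)^n * ((k:ℝ)*Λ)^(2*n) / Nat.factorial (2*n)))
      =O[nhds 0] fun Λ : ℝ => Λ^(2*p+4) := by
    have h := Asymptotics.IsBigO.sum (s := Finset.Icc 1 p) (l := nhds (0:ℝ))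
      (g := fun Λ : ℝ => Λ^(2*(p+2)))
      (A := fun k (Λ : ℝ) => a k * (Real.cos ((k:ℝ)*Λ)
        - ∑ n ∈ Finset.range (p+2), (-1:ℝ)^n * ((k:ℝ)*Λ)^(2*n) / Nat.factorial (2*n)))
      (fun k _ => (cos_taylor_tail_mul (p+2) (k:ℝ)).const_mul_left (a k))
    simpa [show 2*(p+2) = 2*p+4 from by ring, Finset.sum_fn] using h
  have hB : (fun Λ : ℝ => Λ^2 * (2 * ∑ k ∈ Finset.Icc 1 p, b k * (Real.cos ((k:ℝ)*Λ)
        - ∑ n ∈ Finset.range (p+1), (-1:ℝ)^n * ((k:ℝ)*Λ)^(2*n) / Nat.factorial (2*n))))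
      =O[nhds 0] fun Λ : ℝ => Λ^(2*p+4) := by
    have h := Asymptotics.IsBigO.sum (s := Finset.Icc 1 p) (l := nhds (0:ℝ))
      (g := fun Λ : ℝ => Λ^(2*(p+1)))
      (A := fun k (Λ : ℝ) => b k * (Real.cos ((k:ℝ)*Λ)
        - ∑ n ∈ Finset.range (p+1), (-1:ℝ)^n * ((k:ℝ)*Λ)^(2*n) / Nat.factorial (2*n)))
      (fun k _ => (cos_taylor_tail_mul (p+1) (k:ℝ)).const_mul_left (b k))
    have h2 := (isBigO_refl (fun Λ : ℝ => Λ^2) (nhds 0)).mul (h.const_mul_left 2)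
    have he : (fun Λ : ℝ => Λ^2 * Λ^(2*(p+1))) = fun Λ : ℝ => Λ^(2*p+4) := by
      funext Λ; rw [← pow_add]; norm_num; ring_nf
    rw [he] at h2
    simpa only [Finset.sum_apply] using h2
  have hnum : (fun Λ : ℝ => (a₀ + 2 * ∑ k ∈ Finset.Icc 1 p, a k * Real.cos ((k:ℝ) * Λ))
        - Λ^2 * (b₀ + 2 * ∑ k ∈ Finset.Icc 1 p, b k * Real.cos ((k:ℝ) * Λ)))
      =O[nhds 0] fun Λ : ℝ => Λ^(2*p+4) := by
    have h := (hA.const_mul_left 2).sub hB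
    refine h.congr' (Filter.Eventually.of_forall fun Λ => ?_) EventuallyEq.rfl
    have hk := key Λ
    simp only [mul_sub, Finset.sum_sub_distrib] at *
    linear_combination -hk
  -- the denominator tends to 1
  have hDcont : Continuous (fun Λ : ℝ => b₀ + 2 * ∑ k ∈ Finset.Icc 1 p, b k * Real.cos ((k:ℝ) * Λ)) := by
    refine continuous_const.add (continuous_const.mul (continuous_finset_sum _ fun k _ => ?_))
    exact continuous_const.mul (Real.continuous_cos.comp (continuous_const.mul continuous_id))
  have hD1 : Filter.Tendsto (fun Λ : ℝ => b₀ + 2 * ∑ k ∈ Finset.Icc 1 p, b k * Real.cos ((k:ℝ) * Λ))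
      (nhds 0) (nhds 1) := by
    have := hDcont.tendsto 0
    simpa [hb₀] using this
  have hDhalf : ∀ᶠ Λ : ℝ in nhds 0,
      (1:ℝ)/2 < b₀ + 2 * ∑ k ∈ Finset.Icc 1 p, b k * Real.cos ((k:ℝ) * Λ) :=
    hD1.eventually (eventually_gt_nhds (by norm_num))
  refine IsBigO.trans ?_ hnum
  rw [Asymptotics.isBigO_iff]
  refine ⟨2, ?_⟩
  filter_upwards [hDhalf] with Λ hΛ
  set N := a₀ + 2 * ∑ k ∈ Finset.Icc 1 p, a k * Real.cos ((k:ℝ) * Λ) with hN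
  set D := b₀ + 2 * ∑ k ∈ Finset.Icc 1 p, b k * Real.cos ((k:ℝ) * Λ) with hD
  have hDpos : (0:ℝ) < D := by linarith
  have hfrac : N / D - Λ^2 = (N - Λ^2 * D) / D := by
    field_simp
  rw [hfrac, Real.norm_eq_abs, Real.norm_eq_abs, abs_div, abs_of_pos hDpos]
  calc |N - Λ^2*D| / D ≤ |N - Λ^2*D| / (1/2) :=
        div_le_div_of_nonneg_left (abs_nonneg _) (by norm_num) (le_of_lt hΛ)
    _ = 2 * |N - Λ^2*D| := by ring
end

section
/- Let $p \ge 2$ and let $(a_k)_{k=1}^p, (b_k)_{k=1}^p$ satisfy $\sum_{k=1}^p k^2 a_k = -1$, $b_0 + 2\sum_{k=1}^p b_k = 1$ (defining $b_0$), $a_0 = -2\sum_{k=1}^p a_k$, and $\sum_{k=1}^p \left( \frac{k^{2m}}{(2m)!} a_k + \frac{k^{2m-2}}{(2m-2)!} b_k \right) = 0$ for $m = 2, \dots, p$. Then the function $f(\Lambda) = \dfrac{a_0 + 2\sum_{k=1}^p a_k \cos(k\Lambda)}{b_0 + 2\sum_{k=1}^p b_k \cos(k\Lambda)}$ satisfies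 $f(\Lambda) = \Lambda^2 + 2(-1)^{p+1} \left( \sum_{k=1}^p \frac{k^{2p+2}}{(2p+2)!} a_k + \frac{k^{2p}}{(2p)!} b_k \right) \Lambda^{2p+2} + O(\Lambda^{2p+4})$ as $\Lambda \to 0$. -/
open Asymptotics Filter


private lemma st19_pow_bigO {i j : ℕ} (h : j ≤ i) :
    (fun x : ℝ => x ^ i) =O[nhds 0] (fun x => x ^ j) := by
  rw [Asymptotics.isBigO_iff]
  refine ⟨1, ?_⟩
  have hball : ∀ᶠ x : ℝ in nhds 0, |x| ≤ 1 := by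
    filter_upwards [Metric.ball_mem_nhds (0:ℝ) one_pos] with x hx
    rw [Metric.mem_ball, Real.dist_eq, sub_zero] at hx
    exact hx.le
  filter_upwards [hball] with x hx
  simp only [norm_pow, Real.norm_eq_abs, one_mul]
  exact pow_le_pow_of_le_one (abs_nonneg x) hx h

private lemma st19_cos_taylor (n : ℕ) :
    (fun t : ℝ => Real.cos t - ∑ m ∈ Finset.range n,
        (-1:ℝ)^m * t^(2*m) / (Nat.factorial (2*m)))
      =O[nhds 0] (fun t : ℝ => t ^ (2*n)) := by
  have hsC : Summable (fun m : ℕ => (1:ℝ) / (Nat.factorial (2*m))) := by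
    refine Summable.of_nonneg_of_le (fun m => by positivity) (fun m => ?_)
      (by simpa using Real.summable_pow_div_factorial 1)
    rw [inv_eq_one_div]
    apply one_div_le_one_div_of_le
    · exact_mod_cast Nat.factorial_pos m
    · exact_mod_cast Nat.factorial_le (by omega : m ≤ 2*m)
  set C : ℝ := ∑' m : ℕ, (1:ℝ) / (Nat.factorial (2*m)) with hC
  rw [Asymptotics.isBigO_iff]
  refine ⟨C, ?_⟩
  have hball : ∀ᶠ t : ℝ in nhds 0, |t| ≤ 1 := by
    filter_upwards [Metric.ball_mem_nhds (0:ℝ) one_pos] with t ht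
    rw [Metric.mem_ball, Real.dist_eq, sub_zero] at ht
    exact ht.le
  filter_upwards [hball] with t ht
  set f : ℕ → ℝ := fun m => (-1:ℝ)^m * t^(2*m) / (Nat.factorial (2*m)) with hf
  have hsum : Summable f := (Real.hasSum_cos t).summable
  have htsum : ∑' m, f m = Real.cos t := (Real.hasSum_cos t).tsum_eq
  have hrem : Real.cos t - ∑ m ∈ Finset.range n, f m = ∑' m, f (m + n) := by
    have := Summable.sum_add_tsum_nat_add (f := f) n hsum
    linarith [this]
  have hbound : ∀ m : ℕ, ‖f (m + n)‖ ≤ |t|^(2*n) * (1 / (Nat.factorial (2*m))) := by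
    intro m
    have h1 : ‖f (m + n)‖ = |t|^(2*(m+n)) / (Nat.factorial (2*(m+n))) := by
      rw [hf]
      rw [Real.norm_eq_abs, abs_div, abs_mul, abs_pow, abs_pow, abs_neg, abs_one,
        one_pow, one_mul, Nat.abs_cast]
    rw [h1]
    have h2 : |t|^(2*(m+n)) ≤ |t|^(2*n) := by
      refine pow_le_pow_of_le_one (abs_nonneg t) ht (by omega)
    have h3 : (Nat.factorial (2*m) : ℝ) ≤ (Nat.factorial (2*(m+n)) : ℝ) := by
      exact_mod_cast Nat.factorial_le (by omega)
    have h4 : (0:ℝ) < Nat.factorial (2*m) := by exact_mod_cast Nat.factorial_pos _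
    rw [mul_one_div]
    exact div_le_div₀ (by positivity) h2 h4 h3
  have hsum2 : Summable (fun m => ‖f (m + n)‖) := by
    refine Summable.of_nonneg_of_le (fun m => norm_nonneg _) hbound ?_
    exact hsC.mul_left _
  calc ‖Real.cos t - ∑ m ∈ Finset.range n, f m‖ = ‖∑' m, f (m + n)‖ := by rw [hrem]
    _ ≤ ∑' m, ‖f (m + n)‖ := norm_tsum_le_tsum_norm hsum2
    _ ≤ ∑' m, |t|^(2*n) * (1 / (Nat.factorial (2*m))) :=
        Summable.tsum_le_tsum hbound hsum2 (hsC.mul_left _)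
    _ = |t|^(2*n) * C := by rw [tsum_mul_left]
    _ = C * ‖t^(2*n)‖ := by rw [mul_comm, Real.norm_eq_abs, abs_pow]

private lemma st19_cos_taylor_comp (k : ℕ) (n : ℕ) :
    (fun Λ : ℝ => Real.cos ((k:ℝ) * Λ) - ∑ m ∈ Finset.range n,
        (-1:ℝ)^m * ((k:ℝ)*Λ)^(2*m) / (Nat.factorial (2*m)))
      =O[nhds 0] (fun Λ : ℝ => Λ ^ (2*n)) := by
  have htend : Filter.Tendsto (fun Λ : ℝ => (k:ℝ) * Λ) (nhds 0) (nhds 0) := by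
    have := ((continuous_const (y := (k:ℝ))).mul continuous_id).tendsto (0:ℝ)
    simpa [Pi.mul_def] using this
  have h := (st19_cos_taylor n).comp_tendsto htend
  refine h.trans ?_
  have : (fun Λ : ℝ => ((k:ℝ)*Λ)^(2*n)) = fun Λ : ℝ => (k:ℝ)^(2*n) * Λ^(2*n) := by
    funext Λ; rw [mul_pow]
  rw [Function.comp_def]
  simp only [this]
  exact Asymptotics.isBigO_const_mul_self _ _ _


private lemma st19_swap (P n : ℕ) (cf : ℕ → ℝ) (Λ : ℝ) :
    ∑ k ∈ Finset.Icc 1 P, cf k * ∑ m ∈ Finset.range n,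
        (-1:ℝ)^m * ((k:ℝ)*Λ)^(2*m) / (Nat.factorial (2*m))
      = ∑ m ∈ Finset.range n,
        ((-1:ℝ)^m * (∑ k ∈ Finset.Icc 1 P, (k:ℝ)^(2*m) * cf k) / (Nat.factorial (2*m)))
          * Λ^(2*m) := by
  simp_rw [Finset.mul_sum]
  rw [Finset.sum_comm]
  refine Finset.sum_congr rfl fun m _ => ?_
  rw [Finset.sum_div, Finset.sum_mul]
  refine Finset.sum_congr rfl fun k _ => ?_
  rw [mul_pow]; ring

private lemma st19_key (q : ℕ) (α δ : ℕ → ℝ) (a₀ b₀ c β : ℝ)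
    (hα0 : a₀ + 2 * α 0 = 0) (hα1 : 2 * α 1 = 1) (hδ0 : b₀ + 2 * δ 0 = 1)
    (hzero : ∀ m ∈ Finset.range (q+1), α (m+2) - δ (m+1) = 0)
    (hc : 2 * (α (q+3) - δ (q+2)) = c) (hβ : 2 * δ (q+3) = β) (Λ : ℝ) :
    (a₀ + 2 * ∑ m ∈ Finset.range (q+4), α m * Λ^(2*m))
      - Λ^2 * (b₀ + 2 * ∑ m ∈ Finset.range (q+4), δ m * Λ^(2*m))
      = c * Λ^(2*q+6) - β * Λ^(2*q+8) := by
  rw [Finset.sum_range_succ' (fun m => α m * Λ^(2*m)) (q+3),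
    Finset.sum_range_succ' (fun m => α (m+1) * Λ^(2*(m+1))) (q+2),
    Finset.sum_range_succ' (fun m => δ m * Λ^(2*m)) (q+3),
    Finset.sum_range_succ (fun m => δ (m+1) * Λ^(2*(m+1))) (q+2)]
  have hcomb :
      (∑ m ∈ Finset.range (q+2), α (m+1+1) * Λ^(2*(m+1+1)))
        - Λ^2 * ∑ m ∈ Finset.range (q+2), δ (m+1) * Λ^(2*(m+1))
      = ∑ m ∈ Finset.range (q+2), (α (m+2) - δ (m+1)) * Λ^(2*m+4) := by
    rw [Finset.mul_sum, ← Finset.sum_sub_distrib]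
    refine Finset.sum_congr rfl fun m _ => ?_
    have e1 : m+1+1 = m+2 := by omega
    rw [e1]; ring
  have hsplit : ∑ m ∈ Finset.range (q+2), (α (m+2) - δ (m+1)) * Λ^(2*m+4)
      = (c/2) * Λ^(2*q+6) := by
    rw [Finset.sum_range_succ]
    have hz : ∑ m ∈ Finset.range (q+1), (α (m+2) - δ (m+1)) * Λ^(2*m+4) = 0 := by
      refine Finset.sum_eq_zero fun m hm => ?_
      rw [hzero m hm, zero_mul]
    rw [hz, zero_add]
    have e2 : q+1+2 = q+3 := by omega
    have e3 : q+1+1 = q+2 := by omega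
    have e4 : 2*(q+1)+4 = 2*q+6 := by omega
    rw [e2, e3, e4]
    rw [show α (q+3) - δ (q+2) = c/2 by linarith]
  have hq1 : ∑ m ∈ Finset.range (q+2), α (m+1+1) * Λ^(2*(m+1+1))
      = Λ^2 * (∑ m ∈ Finset.range (q+2), δ (m+1) * Λ^(2*(m+1))) + (c/2) * Λ^(2*q+6) := by
    have := hcomb.trans hsplit
    linarith
  rw [hq1]
  have e5 : 2*(q+3) = 2*q+6 := by omega
  rw [e5]
  have hβ' : δ (q+3) = β / 2 := by linarith
  have hα1' : α 1 = 1/2 := by linarith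
  have hα0' : a₀ = -(2 * α 0) := by linarith
  have hδ0' : b₀ = 1 - 2 * δ 0 := by linarith
  rw [hβ', hα1', hα0', hδ0']
  norm_num
  ring

theorem stmt_19 (p : ℕ) (hp : 2 ≤ p) (a b : ℕ → ℝ)
    (hid : ∀ m : ℕ, 2 ≤ m → m ≤ p →
      ∑ k ∈ Finset.Icc 1 p, ((k : ℝ)^(2*m) / Nat.factorial (2*m) * a k
        + (k : ℝ)^(2*m-2) / Nat.factorial (2*m-2) * b k) = 0)
    (hcons : ∑ k ∈ Finset.Icc 1 p, (k : ℝ)^2 * a k = -1)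
    (b₀ : ℝ) (hb₀ : b₀ = 1 - 2 * ∑ k ∈ Finset.Icc 1 p, b k)
    (a₀ : ℝ) (ha₀ : a₀ = -2 * ∑ k ∈ Finset.Icc 1 p, a k) :
    (fun Λ : ℝ =>
        (a₀ + 2 * ∑ k ∈ Finset.Icc 1 p, a k * Real.cos (k * Λ))
          / (b₀ + 2 * ∑ k ∈ Finset.Icc 1 p, b k * Real.cos (k * Λ))
        - Λ^2
        - 2 * (-1 : ℝ)^(p+1)
            * (∑ k ∈ Finset.Icc 1 p, ((k : ℝ)^(2*p+2) / Nat.factorial (2*p+2) * a k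
                + (k : ℝ)^(2*p) / Nat.factorial (2*p) * b k))
            * Λ^(2*p+2))
      =O[nhds 0] (fun Λ : ℝ => Λ^(2*p+4)) := by
  obtain ⟨q, rfl⟩ : ∃ q, p = q + 2 := ⟨p - 2, by omega⟩
  clear hp
  simp only [show 2*(q+2)+4 = 2*q+8 from by omega, show 2*(q+2)+2 = 2*q+6 from by omega,
    show 2*(q+2) = 2*q+4 from by omega, show q+2+1 = q+3 from by omega] at *
  set S := Finset.Icc 1 (q+2) with hS
  set c : ℝ := 2 * (-1:ℝ)^(q+3)
      * (∑ k ∈ S, ((k:ℝ)^(2*q+6) / Nat.factorial (2*q+6) * a k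
          + (k:ℝ)^(2*q+4) / Nat.factorial (2*q+4) * b k)) with hc
  set T : ℕ → ℝ → ℝ := fun k Λ => ∑ m ∈ Finset.range (q+4),
      (-1:ℝ)^m * ((k:ℝ)*Λ)^(2*m) / (Nat.factorial (2*m)) with hT
  set α : ℕ → ℝ := fun m =>
      (-1:ℝ)^m * (∑ k ∈ S, (k:ℝ)^(2*m) * a k) / (Nat.factorial (2*m)) with hα
  set δ : ℕ → ℝ := fun m =>
      (-1:ℝ)^m * (∑ k ∈ S, (k:ℝ)^(2*m) * b k) / (Nat.factorial (2*m)) with hδ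
  set β : ℝ := 2 * δ (q+3) with hβ
  set N : ℝ → ℝ := fun Λ => a₀ + 2 * ∑ k ∈ S, a k * Real.cos ((k:ℝ) * Λ) with hN
  set D : ℝ → ℝ := fun Λ => b₀ + 2 * ∑ k ∈ S, b k * Real.cos ((k:ℝ) * Λ) with hD
  set PN : ℝ → ℝ := fun Λ => a₀ + 2 * ∑ k ∈ S, a k * T k Λ with hPN
  set PD : ℝ → ℝ := fun Λ => b₀ + 2 * ∑ k ∈ S, b k * T k Λ with hPD
  set g : ℝ → ℝ := fun Λ => Λ^2 + c * Λ^(2*q+6) with hg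
  -- sum splitting helper
  have hsplitsum : ∀ (e : ℕ) (cf : ℕ → ℝ),
      ∑ k ∈ S, (k:ℝ)^e / (Nat.factorial e) * cf k
        = (∑ k ∈ S, (k:ℝ)^e * cf k) / (Nat.factorial e) := by
    intro e cf
    rw [Finset.sum_div]
    exact Finset.sum_congr rfl fun k _ => by ring
  ------------------------------------------------------------------
  -- hypotheses of the key polynomial identity
  ------------------------------------------------------------------
  have hα0 : a₀ + 2 * α 0 = 0 := by
    simp only [hα, Nat.mul_zero, pow_zero, one_mul, Nat.factorial_zero, Nat.cast_one, div_one]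
    rw [ha₀]; ring
  have hα1 : 2 * α 1 = 1 := by
    simp only [hα, show (2:ℕ)*1 = 2 from by norm_num, pow_one, hcons]
    norm_num [Nat.factorial]
  have hδ0 : b₀ + 2 * δ 0 = 1 := by
    simp only [hδ, Nat.mul_zero, pow_zero, one_mul, Nat.factorial_zero, Nat.cast_one, div_one]
    rw [hb₀]; ring
  have hzero : ∀ m ∈ Finset.range (q+1), α (m+2) - δ (m+1) = 0 := by
    intro m hm
    rw [Finset.mem_range] at hm
    have h := hid (m+2) (by omega) (by omega)
    rw [show 2*(m+2)-2 = 2*(m+1) from by omega] at h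
    rw [Finset.sum_add_distrib, hsplitsum, hsplitsum] at h
    simp only [hα, hδ]
    have hr : (-1:ℝ)^(m+2) * (∑ k ∈ S, (k:ℝ)^(2*(m+2)) * a k) / (Nat.factorial (2*(m+2)))
        - (-1:ℝ)^(m+1) * (∑ k ∈ S, (k:ℝ)^(2*(m+1)) * b k) / (Nat.factorial (2*(m+1)))
        = (-1:ℝ)^m * ((∑ k ∈ S, (k:ℝ)^(2*(m+2)) * a k) / (Nat.factorial (2*(m+2)))
            + (∑ k ∈ S, (k:ℝ)^(2*(m+1)) * b k) / (Nat.factorial (2*(m+1)))) := by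
      ring
    rw [hr, h, mul_zero]
  have hcval : 2 * (α (q+3) - δ (q+2)) = c := by
    simp only [hα, hδ, show 2*(q+3) = 2*q+6 from by omega, show 2*(q+2) = 2*q+4 from by omega]
    rw [hc, Finset.sum_add_distrib, hsplitsum, hsplitsum]
    ring
  ------------------------------------------------------------------
  -- the exact polynomial identity
  ------------------------------------------------------------------
  have hNP : ∀ Λ : ℝ, PN Λ - Λ^2 * PD Λ = c * Λ^(2*q+6) - β * Λ^(2*q+8) := by
    intro Λ
    have h1 : PN Λ = a₀ + 2 * ∑ m ∈ Finset.range (q+4), α m * Λ^(2*m) := by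
      simp only [hPN, hT, hα]
      rw [st19_swap (q+2) (q+4) a Λ]
    have h2 : PD Λ = b₀ + 2 * ∑ m ∈ Finset.range (q+4), δ m * Λ^(2*m) := by
      simp only [hPD, hT, hδ]
      rw [st19_swap (q+2) (q+4) b Λ]
    rw [h1, h2]
    exact st19_key q α δ a₀ b₀ c β hα0 hα1 hδ0 hzero hcval rfl Λ
  ------------------------------------------------------------------
  -- asymptotic estimates
  ------------------------------------------------------------------
  have hNbig : (fun Λ : ℝ => N Λ - PN Λ) =O[nhds 0] (fun Λ : ℝ => Λ^(2*q+8)) := by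
    have h := Asymptotics.IsBigO.sum (l := nhds (0:ℝ)) (s := S)
      (A := fun k (Λ : ℝ) => a k * (Real.cos ((k:ℝ)*Λ) - T k Λ))
      (g := fun Λ : ℝ => Λ^(2*(q+4)))
      (fun k _ => (st19_cos_taylor_comp k (q+4)).const_mul_left (a k))
    have h2 := h.const_mul_left 2
    rw [show 2*(q+4) = 2*q+8 from by omega] at h2
    refine h2.congr_left fun Λ => ?_
    have e : ∑ k ∈ S, a k * (Real.cos ((k:ℝ)*Λ) - T k Λ)
        = (∑ k ∈ S, a k * Real.cos ((k:ℝ)*Λ)) - ∑ k ∈ S, a k * T k Λ := by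
      rw [← Finset.sum_sub_distrib]
      exact Finset.sum_congr rfl fun k _ => by ring
    simp only [hN, hPN]
    simp only [Finset.sum_apply]; rw [e]; ring
  have hDbig : (fun Λ : ℝ => D Λ - PD Λ) =O[nhds 0] (fun Λ : ℝ => Λ^(2*q+8)) := by
    have h := Asymptotics.IsBigO.sum (l := nhds (0:ℝ)) (s := S)
      (A := fun k (Λ : ℝ) => b k * (Real.cos ((k:ℝ)*Λ) - T k Λ))
      (g := fun Λ : ℝ => Λ^(2*(q+4)))
      (fun k _ => (st19_cos_taylor_comp k (q+4)).const_mul_left (b k))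
    have h2 := h.const_mul_left 2
    rw [show 2*(q+4) = 2*q+8 from by omega] at h2
    refine h2.congr_left fun Λ => ?_
    have e : ∑ k ∈ S, b k * (Real.cos ((k:ℝ)*Λ) - T k Λ)
        = (∑ k ∈ S, b k * Real.cos ((k:ℝ)*Λ)) - ∑ k ∈ S, b k * T k Λ := by
      rw [← Finset.sum_sub_distrib]
      exact Finset.sum_congr rfl fun k _ => by ring
    simp only [hD, hPD]
    simp only [Finset.sum_apply]; rw [e]; ring
  -- 1 - PD = O(Λ^2)
  have hPD1 : (fun Λ : ℝ => 1 - PD Λ) =O[nhds 0] (fun Λ : ℝ => Λ^2) := by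
    have hT1 : ∀ (k : ℕ) (Λ : ℝ), T k Λ - 1
        = ∑ m ∈ Finset.range (q+3),
            (-1:ℝ)^(m+1) * ((k:ℝ)*Λ)^(2*(m+1)) / (Nat.factorial (2*(m+1))) := by
      intro k Λ
      simp only [hT]
      rw [Finset.sum_range_succ'
        (fun m => (-1:ℝ)^m * ((k:ℝ)*Λ)^(2*m) / (Nat.factorial (2*m))) (q+3)]
      norm_num
    have hin : ∀ (k : ℕ), (fun Λ : ℝ => T k Λ - 1) =O[nhds 0] (fun Λ : ℝ => Λ^2) := by
      intro k
      have h := Asymptotics.IsBigO.sum (l := nhds (0:ℝ)) (s := Finset.range (q+3))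
        (A := fun m (Λ : ℝ) => (-1:ℝ)^(m+1) * ((k:ℝ)*Λ)^(2*(m+1)) / (Nat.factorial (2*(m+1))))
        (g := fun Λ : ℝ => Λ^2) ?_
      · exact h.congr_left fun Λ => by simp only [Finset.sum_apply]; exact (hT1 k Λ).symm
      · intro m _
        refine (((Asymptotics.isBigO_const_mul_self
            ((-1:ℝ)^(m+1) * (k:ℝ)^(2*(m+1)) / (Nat.factorial (2*(m+1))))
            (fun Λ : ℝ => Λ^(2*(m+1))) (nhds 0)).trans
          (st19_pow_bigO (by omega : 2 ≤ 2*(m+1)))).congr_left fun Λ => ?_)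
        simp only [mul_pow]; ring
    have h := Asymptotics.IsBigO.sum (l := nhds (0:ℝ)) (s := S)
      (A := fun k (Λ : ℝ) => (-2 * b k) * (T k Λ - 1))
      (g := fun Λ : ℝ => Λ^2)
      (fun k _ => (hin k).const_mul_left (-2 * b k))
    refine h.congr_left fun Λ => ?_
    have e : ∑ k ∈ S, (-2 * b k) * (T k Λ - 1)
        = -2 * (∑ k ∈ S, b k * T k Λ) + 2 * ∑ k ∈ S, b k := by
      rw [Finset.mul_sum, Finset.mul_sum, ← Finset.sum_add_distrib]
      exact Finset.sum_congr rfl fun k _ => by ring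
    simp only [hPD]
    simp only [Finset.sum_apply]; rw [e, hb₀]; ring
  -- D tends to 1
  have hDcont : Continuous D := by
    simp only [hD]
    exact continuous_const.add (continuous_const.mul (continuous_finset_sum _ fun k _ =>
      continuous_const.mul (Real.continuous_cos.comp (continuous_const.mul continuous_id))))
  have hD0 : Filter.Tendsto D (nhds 0) (nhds 1) := by
    have hval : D 0 = 1 := by
      simp only [hD, mul_zero, Real.cos_zero, mul_one]
      rw [hb₀]; ring
    have := hDcont.tendsto 0
    rwa [hval] at this
  have hDinv : (fun Λ : ℝ => (D Λ)⁻¹) =O[nhds 0] (fun _ : ℝ => (1:ℝ)) :=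
    (hD0.inv₀ one_ne_zero).isBigO_one ℝ
  have hDne : ∀ᶠ Λ : ℝ in nhds 0, D Λ ≠ 0 := hD0.eventually_ne one_ne_zero
  -- g = O(1)
  have hgcont : Continuous g := by
    simp only [hg]; fun_prop
  have hgO : g =O[nhds 0] (fun _ : ℝ => (1:ℝ)) := (hgcont.tendsto 0).isBigO_one ℝ
  -- assemble H = N - g * D
  have hterm2 : (fun Λ : ℝ => g Λ * (D Λ - PD Λ)) =O[nhds 0] (fun Λ : ℝ => Λ^(2*q+8)) := by
    have := hgO.mul hDbig
    simpa using this
  have hterm3 : (fun Λ : ℝ => c * Λ^(2*q+6) * (1 - PD Λ)) =O[nhds 0]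
      (fun Λ : ℝ => Λ^(2*q+8)) := by
    have h := (Asymptotics.isBigO_const_mul_self c (fun Λ : ℝ => Λ^(2*q+6))
      (nhds 0)).mul hPD1
    refine h.congr_right fun Λ => ?_
    rw [← pow_add]
  have hterm4 : (fun Λ : ℝ => β * Λ^(2*q+8)) =O[nhds 0] (fun Λ : ℝ => Λ^(2*q+8)) :=
    Asymptotics.isBigO_const_mul_self _ _ _
  have hH : (fun Λ : ℝ => N Λ - g Λ * D Λ) =O[nhds 0] (fun Λ : ℝ => Λ^(2*q+8)) := by
    have h := ((hNbig.sub hterm2).add hterm3).sub hterm4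
    refine h.congr_left fun Λ => ?_
    have hk := hNP Λ
    simp only [hg]
    linear_combination -hk
  -- conclude
  have hfinal : (fun Λ : ℝ => (N Λ - g Λ * D Λ) * (D Λ)⁻¹) =O[nhds 0]
      (fun Λ : ℝ => Λ^(2*q+8)) := by
    have := hH.mul hDinv
    simpa using this
  refine hfinal.congr' ?_ (Filter.EventuallyEq.refl _ _)
  filter_upwards [hDne] with Λ hΛ
  show (N Λ - g Λ * D Λ) * (D Λ)⁻¹ = N Λ / D Λ - Λ^2 - c * Λ^(2*q+6)
  rw [sub_mul, mul_inv_cancel_right₀ hΛ, div_eq_mul_inv]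
  simp only [hg]
  ring
end
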